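/- Let R be a J-Noetherian Bezout domain which does not have stable range 1. Then there exists a nonzero nonunit element a ∈ R such that the quotient ring R/aR is a local ring. -/
import Mathlib


/-- A commutative ring is `J`-Noetherian if it satisfies the ascending chain condition
on `J`-radical ideals, i.e. ideals that equal the intersection of all maximal ideals
containing them (equivalently, ideals fixed by `Ideal.jacobson`). -/
def IsJNoetherian (R : Type*) [CommRing R] : Prop :=
  ∀ f : ℕ →o Ideal R, (∀ n, (f n).jacobson = f n) → ∃ n, ∀ m, n ≤ m → f m = f n

/-- A commutative ring has stable range 1 if whenever `aR + bR = R` there is `t` with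
`a + b * t` a unit. -/
def HasStableRangeOne (R : Type*) [CommRing R] : Prop :=
  ∀ a b : R, Ideal.span {a} + Ideal.span {b} = ⊤ → ∃ t : R, IsUnit (a + b * t)

theorem exists_local_quotient_of_jNoetherian_not_sr1 (R : Type*) [CommRing R] [IsDomain R]
    [IsBezout R] (hJ : IsJNoetherian R) (hsr : ¬HasStableRangeOne R) :
    ∃ a : R, a ≠ 0 ∧ ¬IsUnit a ∧ IsLocalRing (R ⧸ Ideal.span {a}) := by
  classical
  rw [HasStableRangeOne] at hsr
  push_neg at hsr
  obtain ⟨a, b, hab, hbad⟩ := hsr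
  have hanu : ¬IsUnit a := by simpa using hbad 0
  have ha0 : a ≠ 0 := by
    rintro rfl
    have hb : Ideal.span ({b} : Set R) = ⊤ := by
      simpa [Ideal.span_singleton_eq_bot.mpr rfl] using hab
    have hbu : IsUnit b := Ideal.span_singleton_eq_top.mp hb
    refine hbad ↑hbu.unit⁻¹ ?_
    rw [zero_add, IsUnit.mul_val_inv]
    exact isUnit_one
  -- the set of jacobson radicals of principal ideals generated by nonzero nonunits
  set S : Set (Ideal R) :=
    {I | ∃ c : R, c ≠ 0 ∧ ¬IsUnit c ∧ I = (Ideal.span {c}).jacobson} with hS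
  have hfix : ∀ I ∈ S, I.jacobson = I := by
    rintro I ⟨c, -, -, rfl⟩
    exact Ideal.jacobson_idem
  have hSne : S.Nonempty := ⟨(Ideal.span {a}).jacobson, a, ha0, hanu, rfl⟩
  -- S has a maximal element by the ACC
  have hSmax : ∃ J ∈ S, ∀ I ∈ S, J ≤ I → I = J := by
    by_contra hcon
    push_neg at hcon
    obtain ⟨J₀, hJ₀⟩ := hSne
    choose G hG₁ hG₂ hG₃ using fun (p : {I // I ∈ S}) => hcon p.1 p.2
    let g : ℕ → {I // I ∈ S} := fun n => Nat.rec ⟨J₀, hJ₀⟩ (fun _ p => ⟨G p, hG₁ p⟩) n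
    have hmono : Monotone fun n => (g n).1 :=
      monotone_nat_of_le_succ (fun n => hG₂ (g n))
    obtain ⟨n, hn⟩ := hJ ⟨fun n => (g n).1, hmono⟩ (fun n => hfix _ (g n).2)
    exact hG₃ (g n) (hn (n + 1) (Nat.le_succ n))
  obtain ⟨J, hJS, hmax⟩ := hSmax
  obtain ⟨c, hc0, hcu, rfl⟩ := hJS
  refine ⟨c, hc0, hcu, ?_⟩
  have hne : Ideal.span ({c} : Set R) ≠ ⊤ :=
    fun h => hcu (Ideal.span_singleton_eq_top.mp h)
  -- uniqueness of maximal ideals containing c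
  have huniq : ∀ M N : Ideal R, M.IsMaximal → N.IsMaximal → c ∈ M → c ∈ N → M = N := by
    intro M N hM hN hcM hcN
    by_contra hMN
    have hnotle : ¬M ≤ N := fun hle => hMN (hM.eq_of_le hN.ne_top hle)
    obtain ⟨t, htM, htN⟩ := SetLike.not_le_iff_exists.mp hnotle
    obtain ⟨e, he⟩ :=
      (IsBezout.isPrincipal_of_FG (Ideal.span ({c, t} : Set R)) ⟨{c, t}, by simp⟩).principal
    have he' : Ideal.span ({c, t} : Set R) = Ideal.span ({e} : Set R) := he
    have hce : c ∈ Ideal.span ({e} : Set R) := by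
      rw [← he']; exact Ideal.subset_span (by simp)
    have hte : t ∈ Ideal.span ({e} : Set R) := by
      rw [← he']; exact Ideal.subset_span (by simp)
    have he0 : e ≠ 0 := by
      rintro rfl
      rw [Ideal.span_singleton_eq_bot.mpr rfl] at hce
      exact hc0 (by simpa using hce)
    have hse_le_M : Ideal.span ({e} : Set R) ≤ M := by
      rw [← he', Ideal.span_le]
      rintro x hx
      simp only [Set.mem_insert_iff, Set.mem_singleton_iff] at hx
      rcases hx with rfl | rfl
      · exact hcM
      · exact htM
    have henu : ¬IsUnit e := fun hu =>
      hM.ne_top (Ideal.eq_top_of_isUnit_mem _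
        (hse_le_M (Ideal.mem_span_singleton_self e)) hu)
    have hmem : (Ideal.span ({e} : Set R)).jacobson ∈ S := ⟨e, he0, henu, rfl⟩
    have hle : (Ideal.span ({c} : Set R)).jacobson ≤ (Ideal.span ({e} : Set R)).jacobson := by
      refine Ideal.jacobson_mono ?_
      rw [← he']
      exact Ideal.span_mono (by simp)
    have heq := hmax _ hmem hle
    have hjN : (Ideal.span ({c} : Set R)).jacobson ≤ N :=
      sInf_le ⟨Ideal.span_le.mpr (Set.singleton_subset_iff.mpr hcN), hN⟩
    have heN : e ∈ N := hjN (heq ▸ Ideal.le_jacobson (Ideal.mem_span_singleton_self e))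
    exact htN ((Ideal.span_le.mpr (Set.singleton_subset_iff.mpr heN)) hte)
  -- now conclude the quotient is local
  have hnt : Nontrivial (R ⧸ Ideal.span ({c} : Set R)) := Ideal.Quotient.nontrivial_iff.mpr hne
  obtain ⟨Mq, hMq⟩ := Ideal.exists_maximal (R ⧸ Ideal.span ({c} : Set R))
  refine IsLocalRing.of_unique_max_ideal ⟨Mq, hMq, fun I hI => ?_⟩
  have hsurj : Function.Surjective (Ideal.Quotient.mk (Ideal.span ({c} : Set R))) :=
    Ideal.Quotient.mk_surjective
  haveI hI' : I.IsMaximal := hI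
  haveI hMq' : Mq.IsMaximal := hMq
  have hcomapI : (I.comap (Ideal.Quotient.mk (Ideal.span ({c} : Set R)))).IsMaximal :=
    Ideal.comap_isMaximal_of_surjective _ hsurj
  have hcomapM : (Mq.comap (Ideal.Quotient.mk (Ideal.span ({c} : Set R)))).IsMaximal :=
    Ideal.comap_isMaximal_of_surjective _ hsurj
  have hcI : c ∈ I.comap (Ideal.Quotient.mk (Ideal.span ({c} : Set R))) := by
    rw [Ideal.mem_comap, Ideal.Quotient.eq_zero_iff_mem.mpr (Ideal.mem_span_singleton_self c)]
    exact I.zero_mem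
  have hcM : c ∈ Mq.comap (Ideal.Quotient.mk (Ideal.span ({c} : Set R))) := by
    rw [Ideal.mem_comap, Ideal.Quotient.eq_zero_iff_mem.mpr (Ideal.mem_span_singleton_self c)]
    exact Mq.zero_mem
  have hcc := huniq _ _ hcomapI hcomapM hcI hcM
  calc I = Ideal.map (Ideal.Quotient.mk (Ideal.span ({c} : Set R)))
            (I.comap (Ideal.Quotient.mk (Ideal.span ({c} : Set R)))) :=
        (Ideal.map_comap_of_surjective _ hsurj I).symm
    _ = Ideal.map (Ideal.Quotient.mk (Ideal.span ({c} : Set R)))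
            (Mq.comap (Ideal.Quotient.mk (Ideal.span ({c} : Set R)))) := by rw [hcc]
    _ = Mq := Ideal.map_comap_of_surjective _ hsurj Mq
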